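/- Let m ≥ 1, let θ = (θ_1, …, θ_m) ∈ ℝ^m, and let δ ∈ (0, 1). Suppose that for every positive integer k there exists an index i such that θ_i is irrational and Int.fract(k·θ_i) ∈ [0, δ]. Then there exists a nonzero integer vector a ∈ ℤ^m, supported on the set of indices i for which θ_i is irrational (i.e., a_i = 0 whenever θ_i ∈ ℚ), such that a_1·θ_1 + … + a_m·θ_m ∈ ℤ. -/

import Mathlib

open Complex Finset Filter Real Topology

open Complex Finset Filter Real Topology

noncomputable def ee (x : ℝ) : ℂ := Complex.exp (2 * Real.pi * x * Complex.I)

lemma ee_add (x y : ℝ) : ee (x + y) = ee x * ee y := by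
  rw [ee, ee, ee, ← Complex.exp_add]; push_cast; ring_nf

lemma ee_zero : ee 0 = 1 := by simp [ee]

lemma ee_norm (x : ℝ) : ‖ee x‖ = 1 := by
  rw [ee, Complex.norm_exp]
  simp

lemma ee_conj (x : ℝ) : (starRingEnd ℂ) (ee x) = ee (-x) := by
  rw [ee, ee, ← Complex.exp_conj]
  congr 1
  simp [Complex.ext_iff]

lemma ee_eq_one_iff (x : ℝ) : ee x = 1 ↔ ∃ n : ℤ, x = n := by
  rw [ee, Complex.exp_eq_one_iff]
  constructor
  · rintro ⟨n, hn⟩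
    refine ⟨n, ?_⟩
    have h2 : (2 * Real.pi * x : ℂ) * Complex.I = ((n : ℝ) * (2 * Real.pi) : ℝ) * Complex.I := by
      rw [hn]; push_cast; ring
    have := mul_right_cancel₀ Complex.I_ne_zero h2
    have h3 : (2 * Real.pi * x : ℝ) = (n : ℝ) * (2 * Real.pi) := by exact_mod_cast this
    have hpi : (2 * Real.pi) ≠ 0 := by positivity
    field_simp at h3
    nlinarith [Real.pi_pos]
  · rintro ⟨n, hn⟩
    exact ⟨n, by rw [hn]; push_cast; ring⟩

lemma ee_pow (x : ℝ) (n : ℕ) : ee x ^ n = ee (n * x) := by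
  induction n with
  | zero => simp [ee_zero]
  | succ k ih => rw [pow_succ, ih, ← ee_add]; push_cast; ring_nf

lemma ee_sub_one_norm (x : ℝ) : ‖ee x - 1‖ = 2 * |Real.sin (Real.pi * x)| := by
  have h1 : ee x - 1 = Complex.exp (Real.pi * x * Complex.I) *
      (Complex.exp (Real.pi * x * Complex.I) - Complex.exp (-(Real.pi * x * Complex.I))) := by
    rw [mul_sub, ← Complex.exp_add, ← Complex.exp_add, ee]
    ring_nf
    rw [Complex.exp_zero]
    ring
  have h2 : Complex.exp (Real.pi * x * Complex.I) - Complex.exp (-(Real.pi * x * Complex.I)) =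
      2 * Complex.sin (Real.pi * x) * Complex.I := by
    rw [Complex.sin]
    field_simp
    ring_nf
    simp [Complex.I_sq]
    ring
  rw [h1, h2]
  rw [norm_mul, norm_mul, norm_mul]
  have h3 : ‖Complex.exp ((Real.pi * x : ℝ) * Complex.I)‖ = 1 := by
    rw [Complex.norm_exp]; simp
  push_cast at h3 ⊢
  rw [h3]
  have h4 : Complex.sin ((Real.pi : ℂ) * (x : ℂ)) = ((Real.sin (Real.pi * x) : ℝ) : ℂ) := by
    rw [Complex.ofReal_sin]; push_cast; ring_nf
  have h5 : ‖(2:ℂ)‖ = 2 := by norm_num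
  rw [h4, Complex.norm_real, Complex.norm_I, h5]
  simp only [Real.norm_eq_abs]
  ring

noncomputable def DD (M : ℕ) (y : ℝ) : ℂ := ∑ t ∈ Finset.range M, ee (t * y)

lemma DD_norm_le (M : ℕ) (y : ℝ) : ‖DD M y‖ ≤ M := by
  calc ‖DD M y‖ ≤ ∑ t ∈ Finset.range M, ‖ee (t * y)‖ := norm_sum_le _ _
  _ = M := by simp only [ee_norm, Finset.sum_const, Finset.card_range, smul_eq_mul, mul_one, nsmul_eq_mul]

lemma DD_geom (M : ℕ) (y : ℝ) (hy : ee y ≠ 1) :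
    DD M y = (ee y ^ M - 1) / (ee y - 1) := by
  rw [DD, ← geom_sum_eq hy]
  exact Finset.sum_congr rfl fun t _ => by rw [ee_pow]

lemma sin_pos_of_ne_one (y : ℝ) (hy : ee y ≠ 1) : 0 < |Real.sin (Real.pi * y)| := by
  have hne : ee y - 1 ≠ 0 := sub_ne_zero.mpr hy
  have h3 : 0 < ‖ee y - 1‖ := norm_pos_iff.mpr hne
  rw [ee_sub_one_norm] at h3
  linarith

lemma DD_norm_le_inv_sin (M : ℕ) (y : ℝ) (hy : ee y ≠ 1) :
    ‖DD M y‖ ≤ 1 / |Real.sin (Real.pi * y)| := by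
  have hne : ee y - 1 ≠ 0 := sub_ne_zero.mpr hy
  have hs : 0 < |Real.sin (Real.pi * y)| := sin_pos_of_ne_one y hy
  rw [DD_geom M y hy, norm_div]
  have h1 : ‖ee y ^ M - 1‖ ≤ 2 := by
    calc ‖ee y ^ M - 1‖ ≤ ‖ee y ^ M‖ + ‖(1:ℂ)‖ := norm_sub_le _ _
    _ = 2 := by rw [ee_pow, ee_norm]; norm_num
  have h2 : ‖ee y - 1‖ = 2 * |Real.sin (Real.pi * y)| := ee_sub_one_norm y
  have h3 : 0 < ‖ee y - 1‖ := norm_pos_iff.mpr hne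
  rw [div_le_div_iff₀ h3 hs]
  nlinarith

/-- Cesàro average of a nontrivial character tends to 0. -/
lemma cesaro_char (β : ℝ) (hβ : ee β ≠ 1) :
    Tendsto (fun N : ℕ => (N : ℂ)⁻¹ * ∑ k ∈ Finset.range N, ee (k * β)) atTop (𝓝 0) := by
  have hne : ee β - 1 ≠ 0 := sub_ne_zero.mpr hβ
  have hC : (0:ℝ) ≤ 2 / ‖ee β - 1‖ := by positivity
  apply squeeze_zero_norm (a := fun N : ℕ => (N : ℝ)⁻¹ * (2 / ‖ee β - 1‖))
  · intro N
    rw [norm_mul, norm_inv, Complex.norm_natCast]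
    apply mul_le_mul_of_nonneg_left _ (by positivity)
    have hD : (∑ k ∈ Finset.range N, ee (k * β)) = DD N β := rfl
    rw [hD, DD_geom N β hβ, norm_div]
    gcongr
    calc ‖ee β ^ N - 1‖ ≤ ‖ee β ^ N‖ + ‖(1:ℂ)‖ := norm_sub_le _ _
    _ = 2 := by rw [ee_pow, ee_norm]; norm_num
  · have := tendsto_inv_atTop_nhds_zero_nat.mul_const (2 / ‖ee β - 1‖)
    simpa using this

lemma sin_lower (ρ y : ℝ) (hρ : 0 < ρ) (h1 : ρ ≤ Int.fract y) (h2 : Int.fract y ≤ 1 - ρ) :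
    Real.sin (Real.pi * ρ) ≤ |Real.sin (Real.pi * y)| := by
  have hρhalf : ρ ≤ 1/2 := by linarith [Int.fract_lt_one y, Int.fract_nonneg y]
  set f := Int.fract y with hf
  have hfnn : 0 ≤ f := Int.fract_nonneg y
  have hflt : f < 1 := Int.fract_lt_one y
  have hy : y = (⌊y⌋ : ℝ) + f := by rw [hf, Int.fract]; ring
  have habs : |Real.sin (Real.pi * y)| = |Real.sin (Real.pi * f)| := by
    rw [hy, mul_add, Real.sin_add, mul_comm Real.pi ((⌊y⌋:ℝ)), Real.sin_int_mul_pi]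
    rw [zero_mul, zero_add, abs_mul, Real.abs_cos_int_mul_pi, one_mul]
  rw [habs]
  have hsin : Real.sin (Real.pi * f) = Real.sin (Real.pi * (1 - f)) := by
    rw [mul_sub, mul_one, Real.sin_pi_sub]
  have hnn : 0 ≤ Real.sin (Real.pi * f) :=
    Real.sin_nonneg_of_nonneg_of_le_pi (by positivity) (by nlinarith [Real.pi_pos])
  rw [_root_.abs_of_nonneg hnn]
  rcases le_total f (1/2) with hc | hc
  · apply Real.sin_le_sin_of_le_of_le_pi_div_two (by nlinarith [Real.pi_pos]) (by nlinarith [Real.pi_pos])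
    nlinarith [Real.pi_pos]
  · rw [hsin]
    apply Real.sin_le_sin_of_le_of_le_pi_div_two (by nlinarith [Real.pi_pos]) (by nlinarith [Real.pi_pos])
    nlinarith [Real.pi_pos]

lemma ee_sum {α : Type*} (s : Finset α) (f : α → ℝ) :
    ee (∑ x ∈ s, f x) = ∏ x ∈ s, ee (f x) := by
  classical
  induction s using Finset.induction_on with
  | empty => simp [ee_zero]
  | insert _ _ hx ih => rw [Finset.sum_insert hx, Finset.prod_insert hx, ee_add, ih]

set_option maxHeartbeats 1000000 in
/-- Torus-dynamics refinement underlying Theorem 1.1(iii): if for every `k ≥ 1`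
some irrational coordinate `θ_i` has `Int.fract (k θ_i) ∈ [0, δ]` with
`δ ∈ (0,1)`, then there is a non-trivial resonance relation supported on the
irrational coordinates. -/
theorem stmt_15 (m : ℕ) (hm : 1 ≤ m) (θ : Fin m → ℝ) (δ : ℝ)
    (hδ0 : 0 < δ) (hδ1 : δ < 1)
    (h : ∀ k : ℕ, 1 ≤ k →
      ∃ i : Fin m, Irrational (θ i) ∧ Int.fract ((k : ℝ) * θ i) ∈ Set.Icc 0 δ) :
    ∃ a : Fin m → ℤ, a ≠ 0 ∧ (∀ i, ¬Irrational (θ i) → a i = 0) ∧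
      ∃ z : ℤ, ∑ i, (a i : ℝ) * θ i = z := by
  classical
  by_contra hcon
  push_neg at hcon
  set S : Finset (Fin m) := Finset.univ.filter (fun i => Irrational (θ i)) with hS
  set s : ℕ := S.card with hs
  have hs1 : 1 ≤ s := by
    obtain ⟨i, hi, -⟩ := h 1 le_rfl
    exact Finset.card_pos.mpr ⟨i, by simp [hS, hi]⟩
  obtain ⟨n, hn⟩ : ∃ n : ℕ, 2 * s = n + 1 := ⟨2*s - 1, by omega⟩
  have hn1 : 1 ≤ n := by omega
  set ρ : ℝ := (1 - δ) / 2 with hρ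
  set c : ℝ := (1 + δ) / 2 with hc
  have hρ0 : 0 < ρ := by rw [hρ]; linarith
  have hρhalf : ρ ≤ 1/2 := by rw [hρ]; linarith
  set σ : ℝ := Real.sin (Real.pi * ρ) with hσ
  have hσ0 : 0 < σ := by
    apply Real.sin_pos_of_pos_of_lt_pi (by positivity)
    nlinarith [Real.pi_pos]
  have hσ1 : σ ≤ 1 := Real.sin_le_one _
  -- choose M
  obtain ⟨M, hMC, hM2⟩ : ∃ M : ℕ,
      (2*((n:ℝ)+1))^(2*n*s) / σ^(2*(n+1)) < M ∧ 2 ≤ M := by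
    obtain ⟨M, hM⟩ := exists_nat_gt (max ((2*((n:ℝ)+1))^(2*n*s) / σ^(2*(n+1))) 2)
    exact ⟨M, lt_of_le_of_lt (le_max_left _ _) hM,
      by have := lt_of_le_of_lt (le_max_right _ _) hM; exact_mod_cast this.le⟩
  -- index machinery
  set d : ℕ × ℕ → ℤ := fun q => (q.1 : ℤ) - q.2 with hd
  set Q : Fin m × Fin (n+1) → Finset (ℕ × ℕ) :=
    fun x => if x.1 ∈ S then Finset.range M ×ˢ Finset.range M else {(0,0)} with hQ
  set G : Finset (Fin m × Fin (n+1) → ℕ × ℕ) := Fintype.piFinset Q with hG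
  set a : (Fin m × Fin (n+1) → ℕ × ℕ) → Fin m → ℤ :=
    fun g i => ∑ j : Fin (n+1), d (g (i, j)) with ha
  set B : (Fin m × Fin (n+1) → ℕ × ℕ) → ℝ :=
    fun g => ∑ x : Fin m × Fin (n+1), (d (g x) : ℝ) * θ x.1 with hB
  set A : (Fin m × Fin (n+1) → ℕ × ℕ) → ℝ :=
    fun g => ∑ x : Fin m × Fin (n+1), (d (g x) : ℝ) with hA
  set P : ℕ → ℝ := fun k => ∏ i ∈ S, ‖DD M ((k:ℝ) * θ i - c)‖ ^ (2*(n+1)) with hP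
  -- support of a
  have hsupp : ∀ g ∈ G, ∀ i : Fin m, i ∉ S → a g i = 0 := by
    intro g hg i hi
    rw [ha]
    apply Finset.sum_eq_zero
    intro j _
    have := Fintype.mem_piFinset.mp hg (i, j)
    rw [hQ] at this
    simp only [hi, if_neg, if_false] at this
    rw [Finset.mem_singleton] at this
    rw [this]
    simp [hd]
  -- B in terms of a
  have hBa : ∀ g, B g = ∑ i, (a g i : ℝ) * θ i := by
    intro g
    rw [hB]
    dsimp only
    rw [Fintype.sum_prod_type]
    apply Finset.sum_congr rfl
    intro i _
    rw [ha]
    dsimp only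
    push_cast
    rw [Finset.sum_mul]
  have hAa : ∀ g, A g = ∑ i, (a g i : ℝ) := by
    intro g
    rw [hA]
    dsimp only
    rw [Fintype.sum_prod_type]
    apply Finset.sum_congr rfl
    intro i _
    rw [ha]
    dsimp only
    push_cast
    rfl
  -- expansion
  have hsum_q : ∀ y : ℝ, ∑ q ∈ Finset.range M ×ˢ Finset.range M, ee ((d q : ℝ) * y)
      = ((‖DD M y‖^2 : ℝ) : ℂ) := by
    intro y
    rw [Finset.sum_product]
    have step : ∀ t ∈ Finset.range M, ∀ u ∈ Finset.range M,
        ee ((d (t,u) : ℝ) * y) = ee ((t:ℝ)*y) * ee (-((u:ℝ)*y)) := by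
      intro t _ u _
      rw [← ee_add]
      congr 1
      rw [hd]
      push_cast
      ring
    calc ∑ t ∈ Finset.range M, ∑ u ∈ Finset.range M, ee ((d (t,u) : ℝ) * y)
        = ∑ t ∈ Finset.range M, ∑ u ∈ Finset.range M, ee ((t:ℝ)*y) * ee (-((u:ℝ)*y)) :=
          Finset.sum_congr rfl fun t ht => Finset.sum_congr rfl fun u hu => step t ht u hu
    _ = (∑ t ∈ Finset.range M, ee ((t:ℝ)*y)) * (∑ u ∈ Finset.range M, ee (-((u:ℝ)*y))) := by
          rw [Finset.sum_mul_sum]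
    _ = DD M y * (starRingEnd ℂ) (DD M y) := by
          congr 1
          rw [DD, map_sum]
          exact Finset.sum_congr rfl fun u _ => (ee_conj _).symm
    _ = ((‖DD M y‖^2 : ℝ) : ℂ) := by
          rw [Complex.mul_conj, Complex.normSq_eq_norm_sq]
  have hexp : ∀ k : ℕ, ((P k : ℝ) : ℂ) = ∑ g ∈ G, ee ((k:ℝ) * B g - c * A g) := by
    intro k
    have e1 : ((P k : ℝ) : ℂ) = ∏ x : Fin m × Fin (n+1),
        (∑ q ∈ Q x, ee ((d q : ℝ) * ((k:ℝ) * θ x.1 - c))) := by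
      rw [Fintype.prod_prod_type]
      have inner : ∀ i : Fin m, (∏ j : Fin (n+1), ∑ q ∈ Q (i,j), ee ((d q : ℝ) * ((k:ℝ) * θ i - c)))
          = if i ∈ S then ((‖DD M ((k:ℝ) * θ i - c)‖ ^ (2*(n+1)) : ℝ) : ℂ) else 1 := by
        intro i
        by_cases hi : i ∈ S
        · rw [if_pos hi]
          have : ∀ j : Fin (n+1), (∑ q ∈ Q (i,j), ee ((d q : ℝ) * ((k:ℝ) * θ i - c)))
              = ((‖DD M ((k:ℝ) * θ i - c)‖^2 : ℝ) : ℂ) := by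
            intro j
            rw [hQ]
            simp only [hi, if_pos]
            exact hsum_q _
          rw [Finset.prod_congr rfl (fun j _ => this j), Finset.prod_const,
            Finset.card_univ, Fintype.card_fin]
          push_cast
          rw [← pow_mul]
        · rw [if_neg hi]
          apply Finset.prod_eq_one
          intro j _
          rw [hQ]
          simp only [hi, if_neg, if_false]
          rw [Finset.sum_singleton]
          have : (d (0,0) : ℝ) = 0 := by simp [hd]
          rw [this, zero_mul, ee_zero]
      rw [Finset.prod_congr rfl (fun i _ => inner i)]
      rw [← Finset.prod_filter (fun i => i ∈ S) (fun i => ((‖DD M ((k:ℝ) * θ i - c)‖ ^ (2*(n+1)) : ℝ) : ℂ))]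
      have hfil : Finset.univ.filter (fun i => i ∈ S) = S := by
        ext i; simp
      rw [hfil, hP]
      push_cast
      rfl
    rw [e1, Finset.prod_univ_sum]
    apply Finset.sum_congr rfl
    intro g _
    rw [← ee_sum]
    congr 1
    rw [hB, hA]
    dsimp only
    rw [Finset.mul_sum, Finset.mul_sum, ← Finset.sum_sub_distrib]
    apply Finset.sum_congr rfl
    intro x _
    ring
  -- limit
  set T : ℕ := (G.filter (fun g => ∀ i, a g i = 0)).card with hT
  have hlim : Tendsto (fun N : ℕ => (N:ℝ)⁻¹ * ∑ k ∈ Finset.range N, P k) atTop (𝓝 (T:ℝ)) := by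
    set cavg : ℕ → ℂ := fun N => (N:ℂ)⁻¹ * ∑ k ∈ Finset.range N, ((P k : ℝ) : ℂ) with hcavg
    have hswap : ∀ N : ℕ, cavg N = ∑ g ∈ G,
        (ee (-(c * A g)) * ((N:ℂ)⁻¹ * ∑ k ∈ Finset.range N, ee ((k:ℝ) * B g))) := by
      intro N
      rw [hcavg]
      dsimp only
      calc (N:ℂ)⁻¹ * ∑ k ∈ Finset.range N, ((P k : ℝ) : ℂ)
          = (N:ℂ)⁻¹ * ∑ k ∈ Finset.range N, ∑ g ∈ G, ee ((k:ℝ) * B g - c * A g) := by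
            rw [Finset.sum_congr rfl (fun k _ => hexp k)]
      _ = (N:ℂ)⁻¹ * ∑ g ∈ G, ∑ k ∈ Finset.range N, ee ((k:ℝ) * B g - c * A g) := by
            rw [Finset.sum_comm]
      _ = ∑ g ∈ G, (N:ℂ)⁻¹ * ∑ k ∈ Finset.range N, ee ((k:ℝ) * B g - c * A g) := by
            rw [Finset.mul_sum]
      _ = _ := by
            apply Finset.sum_congr rfl
            intro g _
            have hk : ∀ k : ℕ, ee ((k:ℝ) * B g - c * A g)
                = ee (-(c * A g)) * ee ((k:ℝ) * B g) := by
              intro k; rw [← ee_add]; congr 1; ring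
            rw [Finset.sum_congr rfl (fun k _ => hk k), ← Finset.mul_sum]
            ring
    have hterm : ∀ g ∈ G, Tendsto (fun N : ℕ => ee (-(c * A g)) *
        ((N:ℂ)⁻¹ * ∑ k ∈ Finset.range N, ee ((k:ℝ) * B g))) atTop
        (𝓝 (if (∀ i, a g i = 0) then (1:ℂ) else 0)) := by
      intro g hg
      by_cases hz : ∀ i, a g i = 0
      · rw [if_pos hz]
        have hB0 : B g = 0 := by
          rw [hBa g]; apply Finset.sum_eq_zero; intro i _; rw [hz i]; push_cast; ring
        have hA0 : A g = 0 := by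
          rw [hAa g]; apply Finset.sum_eq_zero; intro i _; rw [hz i]; norm_num
        have hev : ∀ᶠ N : ℕ in atTop, ee (-(c * A g)) *
            ((N:ℂ)⁻¹ * ∑ k ∈ Finset.range N, ee ((k:ℝ) * B g)) = 1 := by
          filter_upwards [eventually_ge_atTop 1] with N hN
          have hNne : (N:ℂ) ≠ 0 := by
            exact_mod_cast Nat.cast_ne_zero.mpr (by omega : N ≠ 0)
          rw [hB0, hA0]
          simp only [mul_zero, neg_zero, ee_zero, one_mul, Finset.sum_const,
            Finset.card_range, nsmul_eq_mul, mul_one]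
          exact inv_mul_cancel₀ hNne
        have hev' : (fun N : ℕ => ee (-(c * A g)) *
            ((N:ℂ)⁻¹ * ∑ k ∈ Finset.range N, ee ((k:ℝ) * B g))) =ᶠ[atTop]
            (fun _ => (1:ℂ)) := hev
        exact Tendsto.congr' hev'.symm tendsto_const_nhds
      · rw [if_neg hz]
        push_neg at hz
        obtain ⟨i0, hi0⟩ := hz
        have hane : a g ≠ 0 := fun hfun => hi0 (by rw [hfun]; rfl)
        have hsup : ∀ i, ¬Irrational (θ i) → a g i = 0 := by
          intro i hir
          exact hsupp g hg i (by simp [hS, hir])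
        have hresn := hcon (a g) hane hsup
        have hB1 : ee (B g) ≠ 1 := by
          intro h1
          rw [ee_eq_one_iff] at h1
          obtain ⟨z, hzeq⟩ := h1
          exact hresn z (by rw [← hBa g, hzeq])
        have := (cesaro_char (B g) hB1).const_mul (ee (-(c * A g)))
        simpa using this
    have hsum := tendsto_finset_sum G hterm
    have hTsum : ∑ g ∈ G, (if (∀ i, a g i = 0) then (1:ℂ) else 0) = (T:ℂ) := by
      simp only [Finset.sum_boole]; rfl
    have hCl : Tendsto cavg atTop (𝓝 (T:ℂ)) := by
      rw [← hTsum]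
      exact Tendsto.congr (fun N => (hswap N).symm) hsum
    have hre : ∀ N : ℕ, (N:ℝ)⁻¹ * ∑ k ∈ Finset.range N, P k = (cavg N).re := by
      intro N
      rw [hcavg]
      dsimp only
      have hcast : ((((N:ℝ)⁻¹ * ∑ k ∈ Finset.range N, P k : ℝ)) : ℂ)
          = (N:ℂ)⁻¹ * ∑ k ∈ Finset.range N, ((P k:ℝ):ℂ) := by push_cast; ring
      rw [← hcast, Complex.ofReal_re]
    have hrelim := (Complex.continuous_re.tendsto ((T:ℕ):ℂ)).comp hCl
    have : Tendsto (fun N => (cavg N).re) atTop (𝓝 (T:ℝ)) := by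
      simpa [Function.comp_def] using hrelim
    exact Tendsto.congr (fun N => (hre N).symm) this
  -- pointwise bound
  have hPnn : ∀ k, 0 ≤ P k := by
    intro k; apply Finset.prod_nonneg; intro i _; positivity
  have hbound : ∀ k : ℕ, 1 ≤ k → P k ≤ (1/σ^(2*(n+1))) * ((M:ℝ)^(2*(n+1)))^(s-1) := by
    intro k hk
    obtain ⟨i0, hirr, hfr⟩ := h k hk
    have hi0S : i0 ∈ S := by simp [hS, hirr]
    set y : ℝ := (k:ℝ) * θ i0 - c with hy
    have hcfr : Int.fract c = c := Int.fract_eq_self.mpr ⟨by rw [hc]; linarith, by rw [hc]; linarith⟩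
    have hy1 : ee y ≠ 1 := by
      intro h1
      rw [ee_eq_one_iff] at h1
      obtain ⟨z, hz⟩ := h1
      have heq : (k:ℝ) * θ i0 = (z:ℝ) + c := by rw [hy] at hz; linarith
      have hfc : Int.fract ((k:ℝ) * θ i0) = c := by rw [heq, Int.fract_intCast_add, hcfr]
      have hle := hfr.2
      rw [hfc, hc] at hle
      linarith
    set f : ℝ := Int.fract ((k:ℝ) * θ i0) with hf
    have hf0 : 0 ≤ f := hfr.1
    have hfδ : f ≤ δ := hfr.2
    have hyfloor : y = (⌊(k:ℝ) * θ i0⌋ : ℝ) + (f - c) := by rw [hy, hf, Int.fract]; ring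
    have hfracty : Int.fract y = f - c + 1 := by
      rw [hyfloor, Int.fract_intCast_add]
      have h11 : Int.fract (f - c + 1) = Int.fract (f - c) := by
        have := Int.fract_add_intCast (f - c) 1
        push_cast at this
        exact this
      rw [← h11, Int.fract_eq_self.mpr ⟨by rw [hc]; linarith, by rw [hc]; linarith⟩]
    have h1 : ρ ≤ Int.fract y := by rw [hfracty, hρ, hc]; linarith
    have h2 : Int.fract y ≤ 1 - ρ := by rw [hfracty, hρ, hc]; linarith
    have hsin : σ ≤ |Real.sin (Real.pi * y)| := sin_lower ρ y hρ0 h1 h2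
    have hDb : ‖DD M y‖ ≤ 1/σ := by
      calc ‖DD M y‖ ≤ 1/|Real.sin (Real.pi * y)| := DD_norm_le_inv_sin M y hy1
      _ ≤ 1/σ := one_div_le_one_div_of_le hσ0 hsin
    rw [hP]
    dsimp only
    rw [← Finset.mul_prod_erase S _ hi0S]
    have hfac1 : ‖DD M ((k:ℝ) * θ i0 - c)‖^(2*(n+1)) ≤ (1/σ)^(2*(n+1)) :=
      pow_le_pow_left₀ (norm_nonneg _) hDb _
    have hfac2 : ∏ i ∈ S.erase i0, ‖DD M ((k:ℝ) * θ i - c)‖^(2*(n+1))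
        ≤ ∏ _i ∈ S.erase i0, ((M:ℝ)^(2*(n+1))) := by
      apply Finset.prod_le_prod
      · intro i _; positivity
      · intro i _; exact pow_le_pow_left₀ (norm_nonneg _) (DD_norm_le M _) _
    calc ‖DD M ((k:ℝ) * θ i0 - c)‖^(2*(n+1)) * ∏ i ∈ S.erase i0, ‖DD M ((k:ℝ) * θ i - c)‖^(2*(n+1))
        ≤ (1/σ)^(2*(n+1)) * ∏ _i ∈ S.erase i0, ((M:ℝ)^(2*(n+1))) := by
          apply mul_le_mul hfac1 hfac2 (Finset.prod_nonneg (fun i _ => by positivity)) (by positivity)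
    _ = (1/σ^(2*(n+1))) * ((M:ℝ)^(2*(n+1)))^(s-1) := by
          rw [Finset.prod_const, Finset.card_erase_of_mem hi0S, ← hs, div_pow, one_pow]
  -- limit bounded
  have hTle : (T:ℝ) ≤ (1/σ^(2*(n+1))) * ((M:ℝ)^(2*(n+1)))^(s-1) := by
    set Bd : ℝ := (1/σ^(2*(n+1))) * ((M:ℝ)^(2*(n+1)))^(s-1) with hBd
    have hBd0 : 0 ≤ Bd := by positivity
    have hub : ∀ᶠ N : ℕ in atTop, (N:ℝ)⁻¹ * ∑ k ∈ Finset.range N, P k ≤ P 0 * (N:ℝ)⁻¹ + Bd := by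
      filter_upwards [eventually_ge_atTop 1] with N hN
      obtain ⟨N', rfl⟩ : ∃ N', N = N' + 1 := ⟨N - 1, by omega⟩
      rw [Finset.sum_range_succ']
      have hsum : ∑ k ∈ Finset.range N', P (k + 1) ≤ N' * Bd := by
        calc ∑ k ∈ Finset.range N', P (k+1) ≤ ∑ _k ∈ Finset.range N', Bd :=
              Finset.sum_le_sum (fun k _ => hbound (k+1) (by omega))
        _ = N' * Bd := by rw [Finset.sum_const, Finset.card_range, nsmul_eq_mul]
      have hNpos : (0:ℝ) < ((N'+1 : ℕ):ℝ) := by positivity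
      have hinv0 : (0:ℝ) ≤ (((N'+1:ℕ)):ℝ)⁻¹ := by positivity
      have key : (((N'+1:ℕ)):ℝ)⁻¹ * ((N':ℝ) * Bd) ≤ Bd := by
        rw [inv_mul_le_iff₀ hNpos]
        apply mul_le_mul_of_nonneg_right _ hBd0
        push_cast
        linarith
      have expand : (((N'+1:ℕ)):ℝ)⁻¹ * (∑ k ∈ Finset.range N', P (k+1) + P 0)
          = (((N'+1:ℕ)):ℝ)⁻¹ * (∑ k ∈ Finset.range N', P (k+1)) + P 0 * (((N'+1:ℕ)):ℝ)⁻¹ := by ring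
      rw [expand]
      have h6 : (((N'+1:ℕ)):ℝ)⁻¹ * (∑ k ∈ Finset.range N', P (k+1)) ≤ (((N'+1:ℕ)):ℝ)⁻¹ * ((N':ℝ) * Bd) :=
        mul_le_mul_of_nonneg_left hsum hinv0
      linarith
    have hrhs : Tendsto (fun N : ℕ => P 0 * (N:ℝ)⁻¹ + Bd) atTop (𝓝 (P 0 * 0 + Bd)) :=
      (tendsto_inv_atTop_nhds_zero_nat.const_mul (P 0)).add tendsto_const_nhds
    rw [mul_zero, zero_add] at hrhs
    exact le_of_tendsto_of_tendsto hlim hrhs hub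
  -- counting lower bound
  set K : ℕ := (M-1)/n with hK
  have hTge : (((K:ℝ)+1)^(2*n))^s ≤ (T:ℝ) := by
    set Q0 : Finset (ℕ × ℕ) := Finset.range M ×ˢ Finset.range M with hQ0
    set Wgood : Finset (Fin (n+1) → ℕ × ℕ) :=
      (Fintype.piFinset (fun _ : Fin (n+1) => Q0)).filter
        (fun u => ∑ j : Fin (n+1), d (u j) = 0) with hWg
    have hstepB : (K+1)^(2*n) ≤ Wgood.card := by
      set V : Finset (Fin n → ℕ × ℕ) :=
        Fintype.piFinset (fun _ : Fin n => Finset.range (K+1) ×ˢ Finset.range (K+1)) with hV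
      have hVcard : V.card = ((K+1)*(K+1))^n := by
        rw [hV, Fintype.card_piFinset]
        simp [Finset.card_range]
      have hKM : K + 1 ≤ M := by
        have : K ≤ M - 1 := Nat.div_le_self _ _
        omega
      have hnK : n * K ≤ M - 1 := by
        have := Nat.div_mul_le_self (M-1) n
        rw [hK]
        calc n * ((M-1)/n) = ((M-1)/n) * n := by ring
        _ ≤ M - 1 := Nat.div_mul_le_self (M-1) n
      set φ : (Fin n → ℕ × ℕ) → (Fin (n+1) → ℕ × ℕ) :=
        fun v => Fin.snoc v (M-1 - ∑ j, (v j).1, M-1 - ∑ j, (v j).2) with hφ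
      have hsumb : ∀ v ∈ V, (∑ j, (v j).1) ≤ M - 1 ∧ (∑ j, (v j).2) ≤ M - 1 := by
        intro v hv
        constructor
        · calc ∑ j, (v j).1 ≤ ∑ _j : Fin n, K := by
                apply Finset.sum_le_sum
                intro j _
                have := Fintype.mem_piFinset.mp hv j
                rw [Finset.mem_product] at this
                have := Finset.mem_range.mp this.1
                omega
          _ = n * K := by rw [Finset.sum_const, Finset.card_univ, Fintype.card_fin, smul_eq_mul]
          _ ≤ M - 1 := hnK
        · calc ∑ j, (v j).2 ≤ ∑ _j : Fin n, K := by
                apply Finset.sum_le_sum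
                intro j _
                have := Fintype.mem_piFinset.mp hv j
                rw [Finset.mem_product] at this
                have := Finset.mem_range.mp this.2
                omega
          _ = n * K := by rw [Finset.sum_const, Finset.card_univ, Fintype.card_fin, smul_eq_mul]
          _ ≤ M - 1 := hnK
      have hmaps : ∀ v ∈ V, φ v ∈ Wgood := by
        intro v hv
        obtain ⟨hb1, hb2⟩ := hsumb v hv
        rw [hWg, Finset.mem_filter]
        constructor
        · rw [Fintype.mem_piFinset]
          intro x
          refine Fin.lastCases ?_ ?_ x
          · rw [hφ]
            dsimp only
            rw [Fin.snoc_last, hQ0, Finset.mem_product]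
            constructor
            · rw [Finset.mem_range]; omega
            · rw [Finset.mem_range]; omega
          · intro j
            rw [hφ]
            dsimp only
            rw [Fin.snoc_castSucc]
            have := Fintype.mem_piFinset.mp hv j
            rw [Finset.mem_product] at this
            rw [hQ0, Finset.mem_product, Finset.mem_range, Finset.mem_range]
            have h1 := Finset.mem_range.mp this.1
            have h2 := Finset.mem_range.mp this.2
            omega
        · rw [Fin.sum_univ_castSucc]
          rw [hφ]
          dsimp only
          simp only [Fin.snoc_castSucc, Fin.snoc_last]
          have hd1 : d (M-1 - ∑ j, (v j).1, M-1 - ∑ j, (v j).2)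
              = ((M:ℤ)-1 - ∑ j, ((v j).1 : ℤ)) - ((M:ℤ)-1 - ∑ j, ((v j).2 : ℤ)) := by
            rw [hd]
            dsimp only
            have hM1 : 1 ≤ M := by omega
            rw [Nat.cast_sub hb1, Nat.cast_sub hb2, Nat.cast_sub hM1]
            push_cast
            ring
          rw [hd1]
          have hds : ∀ j : Fin n, d (v j) = ((v j).1 : ℤ) - ((v j).2 : ℤ) := fun j => rfl
          rw [Finset.sum_congr rfl (fun j _ => hds j), Finset.sum_sub_distrib]
          ring
      have hinj : Set.InjOn φ V := by
        intro v _ v' _ heq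
        funext j
        have := congrFun heq (Fin.castSucc j)
        rw [hφ] at this
        dsimp only at this
        rwa [Fin.snoc_castSucc, Fin.snoc_castSucc] at this
      calc (K+1)^(2*n) = ((K+1)*(K+1))^n := by rw [← sq, ← pow_mul, mul_comm 2 n]
      _ = V.card := hVcard.symm
      _ ≤ Wgood.card := Finset.card_le_card_of_injOn φ hmaps hinj
    have hstepA : Wgood.card ^ s ≤ T := by
      set W : Finset (Fin m → Fin (n+1) → ℕ × ℕ) :=
        Fintype.piFinset (fun i => if i ∈ S then Wgood
          else ({fun _ => (0,0)} : Finset (Fin (n+1) → ℕ × ℕ))) with hW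
      have hWcard : W.card = Wgood.card ^ s := by
        rw [hW, Fintype.card_piFinset]
        have hstep : ∀ i : Fin m, (if i ∈ S then Wgood
            else ({fun _ => (0,0)} : Finset (Fin (n+1) → ℕ × ℕ))).card
            = (if i ∈ S then Wgood.card else 1) := by
          intro i; split <;> simp
        rw [Finset.prod_congr rfl (fun i _ => hstep i)]
        rw [← Finset.prod_filter (fun i => i ∈ S) (fun _ => Wgood.card)]
        have hfil : Finset.univ.filter (fun i => i ∈ S) = S := by ext i; simp
        rw [hfil, Finset.prod_const, ← hs]
      rw [hT, ← hWcard]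
      apply Finset.card_le_card_of_injOn (fun u => fun x => u x.1 x.2)
      · intro u hu
        rw [Finset.mem_coe, Finset.mem_filter]
        constructor
        · rw [hG, Fintype.mem_piFinset]
          intro x
          have hx := Fintype.mem_piFinset.mp hu x.1
          by_cases hxS : x.1 ∈ S
          · rw [if_pos hxS] at hx
            rw [hQ]
            dsimp only
            rw [if_pos hxS]
            rw [hWg, Finset.mem_filter] at hx
            exact Fintype.mem_piFinset.mp hx.1 x.2
          · rw [if_neg hxS] at hx
            rw [Finset.mem_singleton] at hx
            rw [hQ]
            dsimp only
            rw [if_neg hxS, hx]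
            exact Finset.mem_singleton_self _
        · intro i
          have hx := Fintype.mem_piFinset.mp hu i
          by_cases hiS : i ∈ S
          · rw [if_pos hiS] at hx
            rw [hWg, Finset.mem_filter] at hx
            rw [ha]
            exact hx.2
          · rw [if_neg hiS] at hx
            rw [Finset.mem_singleton] at hx
            rw [ha]
            dsimp only
            rw [hx]
            simp [hd]
      · intro u _ u' _ heq
        funext i j
        exact congrFun heq (i, j)
    have hnat : ((K+1)^(2*n))^s ≤ T := le_trans (Nat.pow_le_pow_left hstepB s) hstepA
    exact_mod_cast hnat
  -- final contradiction
  have hKge : (M:ℝ)/(2*((n:ℝ)+1)) ≤ (K:ℝ)+1 := by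
    have hKM : M ≤ 2*(n+1)*(K+1) := by
      have h1 : M - 1 < (K+1) * n := by
        have hdm := Nat.div_add_mod (M-1) n
        have hmod : (M-1) % n < n := Nat.mod_lt _ (by omega)
        calc M - 1 = n * ((M-1)/n) + (M-1) % n := hdm.symm
        _ < n * ((M-1)/n) + n := Nat.add_lt_add_left hmod _
        _ = (((M-1)/n) + 1) * n := by ring
        _ = (K+1) * n := by rw [hK]
      have h2 : M ≤ (K+1) * n := by
        have h3 : 1 ≤ M := by omega
        omega
      calc M ≤ (K+1)*n := h2
      _ ≤ 2*(n+1)*(K+1) := by nlinarith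
    have : (M:ℝ) ≤ 2*((n:ℝ)+1)*((K:ℝ)+1) := by exact_mod_cast hKM
    rw [div_le_iff₀ (by positivity)]
    linarith
  -- conclude
  have hMpos : (0:ℝ) < M := by positivity
  have he1 : 2*n*s = 2*(n+1)*(s-1) + 2*s := by
    have h2 : s - 1 + 1 = s := by omega
    nlinarith [Nat.sub_add_cancel hs1]
  have hfinal : ((M:ℝ)/(2*((n:ℝ)+1)))^(2*n*s) ≤ (1/σ^(2*(n+1))) * (M:ℝ)^(2*(n+1)*(s-1)) := by
    calc ((M:ℝ)/(2*((n:ℝ)+1)))^(2*n*s) ≤ (((K:ℝ)+1)^(2*n))^s := by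
          rw [← pow_mul]
          exact pow_le_pow_left₀ (by positivity) hKge _
    _ ≤ (T:ℝ) := hTge
    _ ≤ (1/σ^(2*(n+1))) * ((M:ℝ)^(2*(n+1)))^(s-1) := hTle
    _ = (1/σ^(2*(n+1))) * (M:ℝ)^(2*(n+1)*(s-1)) := by rw [← pow_mul]
  rw [div_pow] at hfinal
  have hM2s : (M:ℝ)^(2*n*s) = (M:ℝ)^(2*(n+1)*(s-1)) * (M:ℝ)^(2*s) := by
    rw [← pow_add, ← he1]
  have hC : (0:ℝ) < (2*((n:ℝ)+1))^(2*n*s) := by positivity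
  have hMe2 : (0:ℝ) < (M:ℝ)^(2*(n+1)*(s-1)) := by positivity
  have hcontra : (M:ℝ)^(2*s) ≤ (2*((n:ℝ)+1))^(2*n*s) / σ^(2*(n+1)) := by
    rw [div_le_iff₀ hC] at hfinal
    rw [hM2s] at hfinal
    have h5 : (M:ℝ)^(2*s) * (M:ℝ)^(2*(n+1)*(s-1)) ≤
        ((2*((n:ℝ)+1))^(2*n*s) / σ^(2*(n+1))) * (M:ℝ)^(2*(n+1)*(s-1)) := by
      calc (M:ℝ)^(2*s) * (M:ℝ)^(2*(n+1)*(s-1))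
          = (M:ℝ)^(2*(n+1)*(s-1)) * (M:ℝ)^(2*s) := by ring
      _ ≤ 1/σ^(2*(n+1)) * (M:ℝ)^(2*(n+1)*(s-1)) * (2*((n:ℝ)+1))^(2*n*s) := hfinal
      _ = ((2*((n:ℝ)+1))^(2*n*s) / σ^(2*(n+1))) * (M:ℝ)^(2*(n+1)*(s-1)) := by ring
    exact le_of_mul_le_mul_right h5 hMe2
  have hMle : (M:ℝ) ≤ (M:ℝ)^(2*s) := by
    calc (M:ℝ) = (M:ℝ)^1 := (pow_one _).symm
    _ ≤ (M:ℝ)^(2*s) := pow_le_pow_right₀ (by exact_mod_cast hM2.trans' (by norm_num) : (1:ℝ) ≤ M) (by omega)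
  linarith
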